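/- Fix an integer m ≥ 1 and work in the polynomial ring ℚ[z][u]. Define H_{m+1}(u) := u^{m+2}·(1 − z·Σ_{e=0}^{m} (m+1−e)·u^e), and, for 0 ≤ i ≤ m, define H_i(u) := u^{i+1}·( 1 + Σ_{k=1}^{i+1} (−z)^k·binomial(i+1, k)·Σ_{e=0}^{m−i} binomial(e+k−1, e)·u^e + Σ_{k=1}^{i} (−z)^k·binomial(m+k−i−1, k−1)·Σ_{e=0}^{i−k} binomial(e+k, e)·u^{m+1−k−e} ). Then for every 1 ≤ i ≤ m+1 one has H_i = u·H_{i−1} + z·∇_m H_{i−1}; equivalently, (u − 1)·(H_i − u·H_{i−1}) = z·u·(H_{i−1} − u^{m+1}·H_{i−1}(1)), where H_{i−1}(1) is the evaluation of H_{i−1} at u = 1. -/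

import Mathlib

/-- The operator `∇_m H := u·(H − u^{m+1}·H(1))/(u − 1)` on `A[u]` (here the division
by `u − 1` is exact, computed as division by the monic polynomial `u − 1`). -/
noncomputable def nabla {A : Type*} [CommRing A] (m : ℕ) (H : Polynomial A) :
    Polynomial A :=
  Polynomial.X *
    Polynomial.divByMonic (H - Polynomial.X ^ (m + 1) * Polynomial.C (H.eval 1))
      (Polynomial.X - 1)

/-- `binomial(e+ℓ, e)` for an integer `ℓ ≥ −1`, with the convention for `ℓ = −1`
(more generally `ℓ < 0`): it equals `1` if `e = 0` and `0` if `e ≥ 1`. -/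
def binomQ (ℓ : ℤ) (e : ℕ) : ℚ :=
  if ℓ < 0 then (if e = 0 then 1 else 0) else ((e + ℓ.toNat).choose e : ℚ)

/-- `R^a_ℓ(u) = Σ_{e=0}^{a} binomial(e+ℓ,e)·u^e`, with the conventions `R^a_{−1} = 1`
for `a ≥ 0` and `R^a_ℓ = 0` for `a < 0`. -/
noncomputable def Rpoly (a ℓ : ℤ) : Polynomial ℚ :=
  if a < 0 then 0
  else ∑ e ∈ Finset.range (a.toNat + 1), Polynomial.C (binomQ ℓ e) * Polynomial.X ^ e

/-- The series `z`, viewed in `ℚ[z][u]` (constant polynomial in `u`). -/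
noncomputable def zC : Polynomial (Polynomial ℚ) := Polynomial.C Polynomial.X

/-- The polynomials `H_i ∈ ℚ[z][u]`, `0 ≤ i ≤ m+1`:
`H_{m+1}(u) = u^{m+2}(1 − z Σ_{e=0}^{m}(m+1−e)u^e)` and, for `0 ≤ i ≤ m`,
`H_i(u) = u^{i+1}(1 + Σ_{k=1}^{i+1}(−z)^k binom(i+1,k) Σ_{e=0}^{m−i} binom(e+k−1,e) u^e
  + Σ_{k=1}^{i}(−z)^k binom(m+k−i−1,k−1) Σ_{e=0}^{i−k} binom(e+k,e) u^{m+1−k−e})`. -/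
noncomputable def Hpoly (m i : ℕ) : Polynomial (Polynomial ℚ) :=
  if i = m + 1 then
    Polynomial.X ^ (m + 2) *
      (1 - zC * ∑ e ∈ Finset.range (m + 1),
          ((m + 1 - e : ℕ) : Polynomial (Polynomial ℚ)) * Polynomial.X ^ e)
  else
    Polynomial.X ^ (i + 1) *
      (1 +
        (∑ k ∈ Finset.Icc 1 (i + 1), (-zC) ^ k *
            (((i + 1).choose k : ℕ) : Polynomial (Polynomial ℚ)) *
            ∑ e ∈ Finset.range (m - i + 1),
              (((e + k - 1).choose e : ℕ) : Polynomial (Polynomial ℚ)) * Polynomial.X ^ e) +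
        ∑ k ∈ Finset.Icc 1 i, (-zC) ^ k *
            (((m + k - i - 1).choose (k - 1) : ℕ) : Polynomial (Polynomial ℚ)) *
            ∑ e ∈ Finset.range (i - k + 1),
              (((e + k).choose e : ℕ) : Polynomial (Polynomial ℚ)) *
                Polynomial.X ^ (m + 1 - k - e))

open Polynomial Finset

namespace HR

abbrev PP := Polynomial (Polynomial ℚ)

noncomputable def w (k : ℕ) : PP := (-zC) ^ (k + 1)

noncomputable def Pp (k a : ℕ) : PP :=
  ∑ e ∈ range (a + 1), (((e + k).choose e : ℕ) : PP) * X ^ e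

noncomputable def Qp (k d M : ℕ) : PP :=
  ∑ e ∈ range (d + 1), (((e + k).choose e : ℕ) : PP) * X ^ (M + d - e)

lemma Pp_zero_a (k : ℕ) : Pp k 0 = 1 := by
  simp [Pp]

lemma Pp_succ (k a : ℕ) : Pp k (a + 1) = Pp k a + (((a + 1 + k).choose (a + 1) : ℕ) : PP) * X ^ (a + 1) := by
  rw [Pp, Finset.sum_range_succ]; rfl

lemma Qp_zero_d (k M : ℕ) : Qp k 0 M = X ^ M := by
  simp [Qp]

lemma Qp_succ_d (k d M : ℕ) : Qp k (d + 1) M = X * Qp k d M + (((d + 1 + k).choose (d + 1) : ℕ) : PP) * X ^ M := by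
  rw [Qp, Finset.sum_range_succ, Qp, Finset.mul_sum]
  refine congrArg₂ (· + ·) ?_ ?_
  · apply Finset.sum_congr rfl
    intro e he
    rw [Finset.mem_range] at he
    rw [mul_left_comm, ← pow_succ']
    congr 2
    omega
  · have h : M + (d + 1) - (d + 1) = M := by omega
    rw [h]

lemma Qp_shift (k d M : ℕ) : Qp k (d + 1) M = Qp k d (M + 1) + (((k + d + 1).choose (d + 1) : ℕ) : PP) * X ^ M := by
  rw [Qp, Finset.sum_range_succ, Qp]
  congr 1
  · apply Finset.sum_congr rfl
    intro e he
    rw [Finset.mem_range] at he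
    congr 2
    omega
  · have h1 : d + 1 + k = k + d + 1 := by omega
    have h2 : M + (d + 1) - (d + 1) = M := by omega
    rw [h1, h2]

lemma mulX_Pp0 (a : ℕ) : (X - 1) * Pp 0 a = X ^ (a + 1) - 1 := by
  have : Pp 0 a = ∑ e ∈ range (a + 1), X ^ e := by
    apply Finset.sum_congr rfl
    intro e _
    simp
  rw [this, ← geom_sum_mul, mul_comm]

lemma mulX_Pp (k a : ℕ) :
    (X - 1) * Pp (k + 1) a = (((a + k + 1).choose a : ℕ) : PP) * X ^ (a + 1) - Pp k a := by
  induction a with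
  | zero =>
    rw [Pp_zero_a, Pp_zero_a]
    simp
  | succ a ih =>
    rw [Pp_succ, Pp_succ, mul_add, ih,
      show a + 1 + (k + 1) = (a + k + 1) + 1 by omega,
      show a + 1 + k + 1 = (a + k + 1) + 1 by omega,
      Nat.choose_succ_succ (a + k + 1) a,
      show a + 1 + k = a + k + 1 by omega]
    push_cast
    ring

lemma mulX_Qp (k d M : ℕ) :
    (X - 1) * Qp (k + 1) d M = Qp k (d + 1) M - (((k + d + 2).choose (k + 1) : ℕ) : PP) * X ^ M := by
  induction d with
  | zero =>
    rw [Qp_zero_d, Qp_succ_d, Qp_zero_d]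
    have h1 : (0 + 1 + k).choose (0 + 1) = k + 1 := by
      rw [show 0 + 1 + k = k + 1 by omega, Nat.choose_one_right]
    have h2 : (k + 0 + 2).choose (k + 1) = k + 2 := by
      rw [show k + 0 + 2 = k + 2 by omega, show k + 1 = (k + 2) - 1 by omega,
        Nat.choose_symm (by omega), Nat.choose_one_right]
    rw [h1, h2]
    push_cast
    ring
  | succ d ih =>
    have hA : (d + 1 + (k + 1)).choose (d + 1) = (k + d + 2).choose (k + 1) := by
      rw [show d + 1 + (k + 1) = k + d + 2 by omega, show d + 1 = (k + d + 2) - (k + 1) by omega,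
        Nat.choose_symm (by omega)]
    have hB : (k + (d + 1) + 2).choose (k + 1) = (d + 1 + 1 + k).choose (d + 1 + 1) + (k + d + 2).choose (k + 1) := by
      rw [show k + (d + 1) + 2 = (k + d + 2) + 1 by omega, Nat.choose_succ_succ,
        show d + 1 + 1 + k = k + d + 2 by omega, show d + 1 + 1 = (k + d + 2) - k by omega,
        Nat.choose_symm (by omega)]
    rw [Qp_succ_d (k + 1) d M, Qp_succ_d k (d + 1) M, hA, hB]
    push_cast
    linear_combination X * ih

lemma chooseSum (k a : ℕ) : ∑ e ∈ range (a + 1), (e + k).choose e = (a + k + 1).choose (k + 1) := by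
  induction a with
  | zero => simp
  | succ a ih =>
    rw [Finset.sum_range_succ, ih,
      show a + 1 + k + 1 = (a + k + 1) + 1 by omega,
      Nat.choose_succ_succ (a + k + 1) k]
    have : (a + k + 1).choose k = (a + 1 + k).choose (a + 1) := by
      rw [show a + 1 + k = a + k + 1 by omega, show a + 1 = (a + k + 1) - k by omega,
        Nat.choose_symm (by omega)]
    simp only [Nat.succ_eq_add_one]
    omega

lemma evalPp (k a : ℕ) : (Pp k a).eval 1 = (((a + k + 1).choose (k + 1) : ℕ) : Polynomial ℚ) := by
  rw [Pp, eval_finset_sum, ← chooseSum k a]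
  push_cast
  simp

lemma evalQp (k d M : ℕ) : (Qp k d M).eval 1 = (((d + k + 1).choose (k + 1) : ℕ) : Polynomial ℚ) := by
  rw [Qp, eval_finset_sum, ← chooseSum k d]
  push_cast
  simp

lemma zC_mul_w (k : ℕ) : zC * w k = -w (k + 1) := by
  rw [w, w, pow_succ (-zC) (k + 1)]
  ring

lemma zC_eq : zC = -w 0 := by rw [w]; ring

lemma Hpoly_eq (a i : ℕ) :
    Hpoly (a + i) i = X ^ (i + 1) *
      (1 + (∑ k ∈ range (i + 1), w k * (((i + 1).choose (k + 1) : ℕ) : PP) * Pp k a)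
         + ∑ k ∈ range i, w k * (((a + k).choose k : ℕ) : PP) * Qp (k + 1) (i - k - 1) (a + 1)) := by
  rw [Hpoly, if_neg (by omega)]
  have h1 : ∀ n : ℕ, Icc 1 n = Ico 1 (n + 1) := fun n => (Finset.Ico_add_one_right_eq_Icc 1 n).symm
  refine congrArg (X ^ (i + 1) * ·) (congrArg₂ (· + ·) ?_ ?_)
  · refine congrArg (1 + ·) ?_
    rw [h1, Finset.sum_Ico_eq_sum_range, show i + 1 + 1 - 1 = i + 1 by omega]
    apply Finset.sum_congr rfl
    intro k hk
    rw [show (1 : ℕ) + k = k + 1 by omega]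
    rw [w, Pp, show a + i - i + 1 = a + 1 by omega]
    congr 1
  · rw [h1, Finset.sum_Ico_eq_sum_range, show i + 1 - 1 = i by omega]
    apply Finset.sum_congr rfl
    intro k hk
    rw [Finset.mem_range] at hk
    rw [show (1 : ℕ) + k = k + 1 by omega]
    rw [w, Qp, show a + i + (k + 1) - i - 1 = a + k by omega,
      show (k + 1) - 1 = k by omega, show i - (k + 1) + 1 = (i - k - 1) + 1 by omega]
    congr 1
    apply Finset.sum_congr rfl
    intro e he
    rw [show a + i + 1 - (k + 1) = a + 1 + (i - k - 1) by omega]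

lemma Hpoly_top (m : ℕ) :
    Hpoly m (m + 1) = X ^ (m + 2) *
      (1 - zC * ∑ e ∈ range (m + 1), ((m + 1 - e : ℕ) : PP) * X ^ e) := by
  rw [Hpoly, if_pos rfl]

lemma S_eq (m : ℕ) : (∑ e ∈ range (m + 1), ((m + 1 - e : ℕ) : PP) * X ^ e) = Qp 1 m 0 := by
  rw [Qp, ← Finset.sum_range_reflect]
  apply Finset.sum_congr rfl
  intro e he
  rw [Finset.mem_range] at he
  rw [show m + 1 - 1 - e = m - e by omega, show m + 1 - (m - e) = e + 1 by omega,
    Nat.choose_succ_self_right, show 0 + m - e = m - e by omega]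

lemma Cw (k : ℕ) : (Polynomial.C ((w k).eval 1) : PP) = w k := by
  rw [w, zC]
  simp [eval_pow, map_pow]

lemma Heval (a i : ℕ) :
    (Polynomial.C ((Hpoly (a + i) i).eval 1) : PP) =
      1 + (∑ k ∈ range (i + 1), w k * (((i + 1).choose (k + 1) : ℕ) : PP) *
            (((a + k + 1).choose (k + 1) : ℕ) : PP))
        + ∑ k ∈ range i, w k * (((a + k).choose k : ℕ) : PP) *
            (((i + 1).choose (k + 2) : ℕ) : PP) := by
  rw [Hpoly_eq, eval_mul, eval_pow, eval_X, one_pow, one_mul, eval_add, eval_add, eval_one,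
    eval_finset_sum, eval_finset_sum, map_add, map_add, map_one, map_sum, map_sum]
  congr 1
  · congr 1
    apply Finset.sum_congr rfl
    intro k _
    rw [eval_mul, eval_mul, evalPp, eval_natCast, map_mul, map_mul, Cw, map_natCast, map_natCast]
  · apply Finset.sum_congr rfl
    intro k hk
    rw [Finset.mem_range] at hk
    rw [eval_mul, eval_mul, evalQp, eval_natCast, map_mul, map_mul, Cw, map_natCast, map_natCast,
      show i - k - 1 + (k + 1) + 1 = i + 1 by omega]

lemma cgen (a k d : ℕ) :
    (((k+d+3).choose (k+2) : ℕ) : PP) * ((((a+k+1).choose a : ℕ) : PP) * X^(a+1) - Pp k a)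
  - (((k+d+2).choose (k+2) : ℕ) : PP) * ((((a+k+2).choose (a+1) : ℕ) : PP) * X^(a+2) - Pp k (a+1))
  + (((a+k+1).choose (k+1) : ℕ) : PP) * (Qp (k+1) (d+1) (a+1) - (((k+d+3).choose (k+2) : ℕ) : PP) * X^(a+1))
  - (((a+k+2).choose (k+1) : ℕ) : PP) * (Qp (k+1) d (a+2) - (((k+d+2).choose (k+2) : ℕ) : PP) * X^(a+2))
  + (((k+d+2).choose (k+1) : ℕ) : PP) * Pp k (a+1)
  + (((a+k+1).choose k : ℕ) : PP) * Qp (k+1) d (a+2)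
  - (((k+d+2).choose (k+1) : ℕ) : PP) * (((a+k+2).choose (k+1) : ℕ) : PP) * X^(a+1)
  - (((a+k+1).choose k : ℕ) : PP) * (((k+d+2).choose (k+2) : ℕ) : PP) * X^(a+1) = 0 := by
  have n3 : (a+k+2).choose (a+1) = (a+k+2).choose (k+1) := by
    have h := Nat.choose_symm (show k+1 ≤ a+k+2 by omega)
    rwa [show a+k+2-(k+1) = a+1 by omega] at h
  have n4 : (a+k+1).choose a = (a+k+1).choose (k+1) := by
    have h := Nat.choose_symm (show k+1 ≤ a+k+1 by omega)
    rwa [show a+k+1-(k+1) = a by omega] at h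
  have n5 : (a+1+k).choose (a+1) = (a+k+1).choose k := by
    have h := Nat.choose_symm (show k ≤ a+k+1 by omega)
    rw [show a+1+k = a+k+1 by omega]
    rwa [show a+k+1-k = a+1 by omega] at h
  have n6 : (k+1+d+1).choose (d+1) = (k+d+2).choose (k+1) := by
    have h := Nat.choose_symm (show k+1 ≤ k+d+2 by omega)
    rw [show k+1+d+1 = k+d+2 by omega]
    rwa [show k+d+2-(k+1) = d+1 by omega] at h
  have n1 : (k+d+3).choose (k+2) = (k+d+2).choose (k+1) + (k+d+2).choose (k+2) := by
    rw [show k+d+3 = k+d+2+1 by omega]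
    exact Nat.choose_succ_succ _ (k+1)
  have n2 : (a+k+2).choose (k+1) = (a+k+1).choose k + (a+k+1).choose (k+1) := by
    rw [show a+k+2 = a+k+1+1 by omega]
    exact Nat.choose_succ_succ _ k
  rw [Pp_succ k a, Qp_shift (k+1) d (a+1), n3, n4, n5, n6, n1, n2]
  push_cast
  ring

lemma c0 (a j : ℕ) :
    ((j+2 : ℕ) : PP) * (X^(a+1) - 1) - ((j+1 : ℕ) : PP) * (X^(a+2) - 1)
  + (Qp 0 (j+1) (a+1) - ((j+2 : ℕ) : PP) * X^(a+1))
  - (Qp 0 j (a+2) - ((j+1 : ℕ) : PP) * X^(a+2))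
  + 1 - X^(a+1) = 0 := by
  rw [Qp_shift 0 j (a+1), show (0+j+1).choose (j+1) = 1 by simp]
  push_cast
  ring

lemma ctop (a j : ℕ) :
    (((a+j+1).choose a : ℕ) : PP) * X^(a+1) - Pp j a
  + (Pp j (a+1) - (((a+j+2).choose (j+1) : ℕ) : PP) * X^(a+1)) = 0 := by
  have n1 : (a+j+2).choose (j+1) = (a+j+1).choose a + (a+j+1).choose (a+1) := by
    have h := Nat.choose_symm (show a+1 ≤ a+j+2 by omega)
    rw [show a+j+2-(a+1) = j+1 by omega] at h
    rw [h, show a+j+2 = a+j+1+1 by omega]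
    exact Nat.choose_succ_succ _ a
  have n5 : (a+1+j).choose (a+1) = (a+j+1).choose (a+1) := by
    rw [show a+1+j = a+j+1 by omega]
  rw [Pp_succ j a, n1, n5]
  push_cast
  ring

noncomputable def f1 (a j k : ℕ) : PP :=
  w (k+1) * ((((j+2).choose (k+2) : ℕ) : PP) * ((((a+k+1).choose a : ℕ) : PP) * X^(a+1) - Pp k a))
noncomputable def f2 (a j k : ℕ) : PP :=
  w (k+1) * ((((j+1).choose (k+2) : ℕ) : PP) * ((((a+k+2).choose (a+1) : ℕ) : PP) * X^(a+2) - Pp k (a+1)))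
noncomputable def f3 (a j k : ℕ) : PP :=
  w (k+1) * ((((a+k+1).choose (k+1) : ℕ) : PP) * (Qp (k+1) (j-k) (a+1) - (((j+2).choose (k+2) : ℕ) : PP) * X^(a+1)))
noncomputable def f4 (a j k : ℕ) : PP :=
  w (k+1) * ((((a+k+2).choose (k+1) : ℕ) : PP) * (Qp (k+1) (j-k-1) (a+2) - (((j+1).choose (k+2) : ℕ) : PP) * X^(a+2)))
noncomputable def f5 (a j k : ℕ) : PP :=
  w (k+1) * ((((j+1).choose (k+1) : ℕ) : PP) * Pp k (a+1))
noncomputable def f6 (a j k : ℕ) : PP :=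
  w (k+1) * ((((a+k+1).choose k : ℕ) : PP) * Qp (k+1) (j-k-1) (a+2))
noncomputable def f7 (a j k : ℕ) : PP :=
  w (k+1) * ((((j+1).choose (k+1) : ℕ) : PP) * (((a+k+2).choose (k+1) : ℕ) : PP) * X^(a+1))
noncomputable def f8 (a j k : ℕ) : PP :=
  w (k+1) * ((((a+k+1).choose k : ℕ) : PP) * (((j+1).choose (k+2) : ℕ) : PP) * X^(a+1))

noncomputable def g4 (a j k : ℕ) : PP :=
  w k * (((a+1+k).choose k : ℕ) : PP) * (Qp k (j-k) (a+2) - (((j+1).choose (k+1) : ℕ) : PP) * X^(a+2))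

lemma key1 (a j : ℕ) :
    (X - 1) *
        ((1 + (∑ k ∈ range (j+1+1), w k * (((j+1+1).choose (k+1) : ℕ) : PP) * Pp k a)
            + ∑ k ∈ range (j+1), w k * (((a+k).choose k : ℕ) : PP) * Qp (k+1) (j+1-k-1) (a+1))
          - (1 + (∑ k ∈ range (j+1), w k * (((j+1).choose (k+1) : ℕ) : PP) * Pp k (a+1))
            + ∑ k ∈ range j, w k * (((a+1+k).choose k : ℕ) : PP) * Qp (k+1) (j-k-1) (a+1+1))) =
      zC * (1 + (∑ k ∈ range (j+1), w k * (((j+1).choose (k+1) : ℕ) : PP) * Pp k (a+1))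
            + ∑ k ∈ range j, w k * (((a+1+k).choose k : ℕ) : PP) * Qp (k+1) (j-k-1) (a+1+1))
        - zC * X^(a+1) *
          (1 + (∑ k ∈ range (j+1), w k * (((j+1).choose (k+1) : ℕ) : PP) * (((a+1+k+1).choose (k+1) : ℕ) : PP))
            + ∑ k ∈ range j, w k * (((a+1+k).choose k : ℕ) : PP) * (((j+1).choose (k+2) : ℕ) : PP)) := by
  have hA1 : (X - 1) * (∑ k ∈ range (j+1+1), w k * (((j+1+1).choose (k+1) : ℕ) : PP) * Pp k a)
      = (∑ k ∈ range (j+1), f1 a j k) + w 0 * (((j+2 : ℕ) : PP) * (X^(a+1) - 1)) := by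
    rw [Finset.mul_sum, Finset.sum_range_succ']
    refine congrArg₂ (· + ·) ?_ ?_
    · apply Finset.sum_congr rfl
      intro k hk
      simp only [f1]
      rw [show j+1+1 = j+2 by omega, show k+1+1 = k+2 by omega]
      linear_combination (w (k+1) * (((j+2).choose (k+2) : ℕ) : PP)) * mulX_Pp k a
    · rw [show (0:ℕ)+1 = 1 by omega, show j+1+1 = j+2 by omega, Nat.choose_one_right]
      linear_combination (w 0 * ((j+2 : ℕ) : PP)) * mulX_Pp0 a
  have hB1 : (X - 1) * (∑ k ∈ range (j+1), w k * (((a+k).choose k : ℕ) : PP) * Qp (k+1) (j+1-k-1) (a+1))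
      = (∑ k ∈ range j, f3 a j k) + w 0 * (Qp 0 (j+1) (a+1) - ((j+2 : ℕ) : PP) * X^(a+1)) := by
    rw [Finset.mul_sum, Finset.sum_range_succ']
    refine congrArg₂ (· + ·) ?_ ?_
    · apply Finset.sum_congr rfl
      intro k hk
      rw [Finset.mem_range] at hk
      simp only [f3]
      rw [show j+1-(k+1)-1 = j-k-1 by omega, show a+(k+1) = a+k+1 by omega,
        show k+1+1 = k+2 by omega]
      have h := mulX_Qp (k+1) (j-k-1) (a+1)
      rw [show j-k-1+1 = j-k by omega, show k+1+(j-k-1)+2 = j+2 by omega] at h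
      linear_combination (w (k+1) * (((a+k+1).choose (k+1) : ℕ) : PP)) * h
    · rw [show (a+0).choose 0 = 1 by simp, show j+1-0-1 = j by omega]
      have h := mulX_Qp 0 j (a+1)
      rw [show 0+j+2 = j+2 by omega] at h
      rw [show (0:ℕ)+1 = 1 by omega, Nat.choose_one_right] at h
      linear_combination (w 0) * h
  have hA2 : (X - 1) * (∑ k ∈ range (j+1), w k * (((j+1).choose (k+1) : ℕ) : PP) * Pp k (a+1))
      = (∑ k ∈ range j, f2 a j k) + w 0 * (((j+1 : ℕ) : PP) * (X^(a+2) - 1)) := by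
    rw [Finset.mul_sum, Finset.sum_range_succ']
    refine congrArg₂ (· + ·) ?_ ?_
    · apply Finset.sum_congr rfl
      intro k hk
      simp only [f2]
      rw [show k+1+1 = k+2 by omega]
      have h := mulX_Pp k (a+1)
      rw [show a+1+k+1 = a+k+2 by omega, show a+1+1 = a+2 by omega] at h
      linear_combination (w (k+1) * (((j+1).choose (k+2) : ℕ) : PP)) * h
    · rw [show (0:ℕ)+1 = 1 by omega, Nat.choose_one_right]
      have h := mulX_Pp0 (a+1)
      rw [show a+1+1 = a+2 by omega] at h
      linear_combination (w 0 * ((j+1 : ℕ) : PP)) * h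
  have hB2 : (X - 1) * (∑ k ∈ range j, w k * (((a+1+k).choose k : ℕ) : PP) * Qp (k+1) (j-k-1) (a+1+1))
      = (∑ k ∈ range j, f4 a j k) + w 0 * (Qp 0 j (a+2) - ((j+1 : ℕ) : PP) * X^(a+2)) := by
    rw [Finset.mul_sum]
    rw [Finset.sum_congr rfl (fun k hk => ?_)]
    rotate_left
    · exact fun k => g4 a j k
    · rw [Finset.mem_range] at hk
      simp only [g4]
      have h := mulX_Qp k (j-k-1) (a+1+1)
      rw [show j-k-1+1 = j-k by omega, show k+(j-k-1)+2 = j+1 by omega,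
        show a+1+1 = a+2 by omega] at h
      rw [show a+1+1 = a+2 by omega]
      linear_combination (w k * (((a+1+k).choose k : ℕ) : PP)) * h
    · have hpad : ∑ k ∈ range j, g4 a j k = ∑ k ∈ range (j+1), g4 a j k := by
        rw [Finset.sum_range_succ]
        have hz : g4 a j j = 0 := by
          simp only [g4]
          rw [Nat.sub_self, Qp_zero_d, Nat.choose_self]
          simp
        rw [hz, add_zero]
      rw [hpad, Finset.sum_range_succ']
      refine congrArg₂ (· + ·) ?_ ?_
      · apply Finset.sum_congr rfl
        intro k hk
        rw [Finset.mem_range] at hk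
        simp only [g4, f4]
        rw [show a+1+(k+1) = a+k+2 by omega, show j-(k+1) = j-k-1 by omega,
          show k+1+1 = k+2 by omega]
        ring
      · simp only [g4]
        rw [show a+1+0 = a+1 by omega, Nat.choose_zero_right, show j-0 = j by omega,
          show (0:ℕ)+1 = 1 by omega, Nat.choose_one_right]
        push_cast
        ring
  have hR1 : zC * (∑ k ∈ range (j+1), w k * (((j+1).choose (k+1) : ℕ) : PP) * Pp k (a+1))
      = -∑ k ∈ range (j+1), f5 a j k := by
    rw [Finset.mul_sum, ← Finset.sum_neg_distrib]
    apply Finset.sum_congr rfl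
    intro k hk
    simp only [f5]
    linear_combination ((((j+1).choose (k+1) : ℕ) : PP) * Pp k (a+1)) * zC_mul_w k
  have hR2 : zC * (∑ k ∈ range j, w k * (((a+1+k).choose k : ℕ) : PP) * Qp (k+1) (j-k-1) (a+1+1))
      = -∑ k ∈ range j, f6 a j k := by
    rw [Finset.mul_sum, ← Finset.sum_neg_distrib]
    apply Finset.sum_congr rfl
    intro k hk
    simp only [f6]
    rw [show a+1+k = a+k+1 by omega, show a+1+1 = a+2 by omega]
    linear_combination ((((a+k+1).choose k : ℕ) : PP) * Qp (k+1) (j-k-1) (a+2)) * zC_mul_w k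
  have hE1 : zC * X^(a+1) * (∑ k ∈ range (j+1), w k * (((j+1).choose (k+1) : ℕ) : PP) * (((a+1+k+1).choose (k+1) : ℕ) : PP))
      = -∑ k ∈ range (j+1), f7 a j k := by
    rw [Finset.mul_sum, ← Finset.sum_neg_distrib]
    apply Finset.sum_congr rfl
    intro k hk
    simp only [f7]
    rw [show a+1+k+1 = a+k+2 by omega]
    linear_combination (X^(a+1) * (((j+1).choose (k+1) : ℕ) : PP) * (((a+k+2).choose (k+1) : ℕ) : PP)) * zC_mul_w k
  have hE2 : zC * X^(a+1) * (∑ k ∈ range j, w k * (((a+1+k).choose k : ℕ) : PP) * (((j+1).choose (k+2) : ℕ) : PP))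
      = -∑ k ∈ range j, f8 a j k := by
    rw [Finset.mul_sum, ← Finset.sum_neg_distrib]
    apply Finset.sum_congr rfl
    intro k hk
    simp only [f8]
    rw [show a+1+k = a+k+1 by omega]
    linear_combination (X^(a+1) * (((a+k+1).choose k : ℕ) : PP) * (((j+1).choose (k+2) : ℕ) : PP)) * zC_mul_w k
  have hgen : ∀ k ∈ range j,
      f1 a j k - f2 a j k + f3 a j k - f4 a j k + f5 a j k + f6 a j k - f7 a j k - f8 a j k = 0 := by
    intro k hk
    rw [Finset.mem_range] at hk
    obtain ⟨d, rfl⟩ : ∃ d, j = k+d+1 := ⟨j-k-1, by omega⟩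
    simp only [f1, f2, f3, f4, f5, f6, f7, f8]
    rw [show k+d+1+2 = k+d+3 by omega, show k+d+1+1 = k+d+2 by omega,
      show k+d+1-k-1 = d by omega, show k+d+1-k = d+1 by omega]
    linear_combination (w (k+1)) * cgen a k d
  have hgensum : (∑ k ∈ range j, f1 a j k) - (∑ k ∈ range j, f2 a j k) + (∑ k ∈ range j, f3 a j k)
      - (∑ k ∈ range j, f4 a j k) + (∑ k ∈ range j, f5 a j k) + (∑ k ∈ range j, f6 a j k)
      - (∑ k ∈ range j, f7 a j k) - (∑ k ∈ range j, f8 a j k) = 0 := by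
    have h0 := Finset.sum_eq_zero hgen
    simp only [Finset.sum_add_distrib, Finset.sum_sub_distrib] at h0
    exact h0
  have htop : f1 a j j + f5 a j j - f7 a j j = 0 := by
    simp only [f1, f5, f7]
    rw [show j+2 = (j+2) by rfl]
    rw [Nat.choose_self, Nat.choose_self]
    linear_combination (w (j+1)) * ctop a j
  have hsplit1 : (∑ k ∈ range (j+1), f1 a j k) = (∑ k ∈ range j, f1 a j k) + f1 a j j :=
    Finset.sum_range_succ _ j
  have hsplit5 : (∑ k ∈ range (j+1), f5 a j k) = (∑ k ∈ range j, f5 a j k) + f5 a j j :=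
    Finset.sum_range_succ _ j
  have hsplit7 : (∑ k ∈ range (j+1), f7 a j k) = (∑ k ∈ range j, f7 a j k) + f7 a j j :=
    Finset.sum_range_succ _ j
  linear_combination hA1 + hB1 - hA2 - hB2 - hR1 - hR2 + hE1 + hE2 + hgensum + htop
    + hsplit1 + hsplit5 - hsplit7 + (w 0) * c0 a j + (X^(a+1) - 1) * zC_eq

lemma key2 (m : ℕ) :
    (X - 1) *
        ((1 - zC * ∑ e ∈ range (m+1), ((m+1-e : ℕ) : PP) * X^e)
          - (1 + (∑ k ∈ range (m+1), w k * (((m+1).choose (k+1) : ℕ) : PP) * Pp k 0)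
            + ∑ k ∈ range m, w k * ((k.choose k : ℕ) : PP) * Qp (k+1) (m-k-1) 1)) =
      zC * ((1 + (∑ k ∈ range (m+1), w k * (((m+1).choose (k+1) : ℕ) : PP) * Pp k 0)
            + ∑ k ∈ range m, w k * ((k.choose k : ℕ) : PP) * Qp (k+1) (m-k-1) 1)
        - (1 + (∑ k ∈ range (m+1), w k * (((m+1).choose (k+1) : ℕ) : PP) * (((k+1).choose (k+1) : ℕ) : PP))
            + ∑ k ∈ range m, w k * ((k.choose k : ℕ) : PP) * (((m+1).choose (k+2) : ℕ) : PP))) := by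
  have hA0 : (∑ k ∈ range (m+1), w k * (((m+1).choose (k+1) : ℕ) : PP) * Pp k 0)
      = ∑ k ∈ range (m+1), w k * (((m+1).choose (k+1) : ℕ) : PP) := by
    apply Finset.sum_congr rfl
    intro k _
    rw [Pp_zero_a, mul_one]
  have hA0' : (∑ k ∈ range (m+1), w k * (((m+1).choose (k+1) : ℕ) : PP) * (((k+1).choose (k+1) : ℕ) : PP))
      = ∑ k ∈ range (m+1), w k * (((m+1).choose (k+1) : ℕ) : PP) := by
    apply Finset.sum_congr rfl
    intro k _
    rw [Nat.choose_self, Nat.cast_one, mul_one]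
  have hB0 : (∑ k ∈ range m, w k * ((k.choose k : ℕ) : PP) * Qp (k+1) (m-k-1) 1)
      = ∑ k ∈ range m, w k * Qp (k+1) (m-k-1) 1 := by
    apply Finset.sum_congr rfl
    intro k _
    rw [Nat.choose_self, Nat.cast_one, mul_one]
  have hB0' : (∑ k ∈ range m, w k * ((k.choose k : ℕ) : PP) * (((m+1).choose (k+2) : ℕ) : PP))
      = ∑ k ∈ range m, w k * (((m+1).choose (k+2) : ℕ) : PP) := by
    apply Finset.sum_congr rfl
    intro k _
    rw [Nat.choose_self, Nat.cast_one, mul_one]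
  rw [hA0, hA0', hB0, hB0']
  have hS : (X - 1) * (∑ e ∈ range (m+1), ((m+1-e : ℕ) : PP) * X^e)
      = Qp 0 m 1 + 1 - ((m+2 : ℕ) : PP) := by
    rw [S_eq]
    have h := mulX_Qp 0 m 0
    rw [show (0:ℕ)+1 = 1 by omega, show 0+m+2 = m+2 by omega, Nat.choose_one_right] at h
    have hq := Qp_shift 0 m 0
    rw [show 0+m+1 = m+1 by omega, Nat.choose_self] at hq
    rw [h, hq]
    push_cast
    ring
  have hAx : (X - 1) * (∑ k ∈ range (m+1), w k * (((m+1).choose (k+1) : ℕ) : PP))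
      = (∑ k ∈ range m, (X - 1) * (w (k+1) * (((m+1).choose (k+2) : ℕ) : PP)))
        + (X - 1) * (w 0 * ((m+1 : ℕ) : PP)) := by
    rw [Finset.mul_sum, Finset.sum_range_succ']
    refine congrArg₂ (· + ·) ?_ ?_
    all_goals first
      | (apply Finset.sum_congr rfl
         intro k _
         rw [show k+1+1 = k+2 by omega])
      | rw [show (0:ℕ)+1 = 1 by omega, Nat.choose_one_right]
  have hBx : (X - 1) * (∑ k ∈ range m, w k * Qp (k+1) (m-k-1) 1)
      = (∑ k ∈ range m, w (k+1) * (Qp (k+1) (m-k-1) 1 - (((m+1).choose (k+2) : ℕ) : PP) * X))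
        + w 0 * (Qp 0 m 1 - ((m+1 : ℕ) : PP) * X) := by
    rw [Finset.mul_sum]
    rw [Finset.sum_congr rfl (fun k hk => ?_)]
    rotate_left
    · exact fun k => w k * (Qp k (m-k) 1 - (((m+1).choose (k+1) : ℕ) : PP) * X)
    · rw [Finset.mem_range] at hk
      have h := mulX_Qp k (m-k-1) 1
      rw [show m-k-1+1 = m-k by omega, show k+(m-k-1)+2 = m+1 by omega, pow_one] at h
      linear_combination (w k) * h
    · have hpad : (∑ k ∈ range m, w k * (Qp k (m-k) 1 - (((m+1).choose (k+1) : ℕ) : PP) * X))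
          = ∑ k ∈ range (m+1), w k * (Qp k (m-k) 1 - (((m+1).choose (k+1) : ℕ) : PP) * X) := by
        rw [Finset.sum_range_succ]
        have hz : w m * (Qp m (m-m) 1 - (((m+1).choose (m+1) : ℕ) : PP) * X) = 0 := by
          rw [Nat.sub_self, Qp_zero_d, Nat.choose_self, pow_one]
          simp
        rw [hz, add_zero]
      rw [hpad, Finset.sum_range_succ']
      refine congrArg₂ (· + ·) ?_ ?_
      all_goals first
        | (apply Finset.sum_congr rfl
           intro k hk
           rw [Finset.mem_range] at hk
           rw [show m-(k+1) = m-k-1 by omega, show k+1+1 = k+2 by omega])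
        | rw [show m-0 = m by omega, show (0:ℕ)+1 = 1 by omega, Nat.choose_one_right]
  have hRB : zC * (∑ k ∈ range m, w k * Qp (k+1) (m-k-1) 1)
      = -∑ k ∈ range m, w (k+1) * Qp (k+1) (m-k-1) 1 := by
    rw [Finset.mul_sum, ← Finset.sum_neg_distrib]
    apply Finset.sum_congr rfl
    intro k _
    linear_combination (Qp (k+1) (m-k-1) 1) * zC_mul_w k
  have hRB' : zC * (∑ k ∈ range m, w k * (((m+1).choose (k+2) : ℕ) : PP))
      = -∑ k ∈ range m, w (k+1) * (((m+1).choose (k+2) : ℕ) : PP) := by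
    rw [Finset.mul_sum, ← Finset.sum_neg_distrib]
    apply Finset.sum_congr rfl
    intro k _
    linear_combination ((((m+1).choose (k+2) : ℕ) : PP)) * zC_mul_w k
  have hgen2 : ∀ k ∈ range m,
      (X - 1) * (w (k+1) * (((m+1).choose (k+2) : ℕ) : PP))
        + w (k+1) * (Qp (k+1) (m-k-1) 1 - (((m+1).choose (k+2) : ℕ) : PP) * X)
        - w (k+1) * Qp (k+1) (m-k-1) 1
        + w (k+1) * (((m+1).choose (k+2) : ℕ) : PP) = 0 := by
    intro k _
    ring
  have hgensum2 : (∑ k ∈ range m, (X - 1) * (w (k+1) * (((m+1).choose (k+2) : ℕ) : PP)))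
      + (∑ k ∈ range m, w (k+1) * (Qp (k+1) (m-k-1) 1 - (((m+1).choose (k+2) : ℕ) : PP) * X))
      - (∑ k ∈ range m, w (k+1) * Qp (k+1) (m-k-1) 1)
      + (∑ k ∈ range m, w (k+1) * (((m+1).choose (k+2) : ℕ) : PP)) = 0 := by
    have h0 := Finset.sum_eq_zero hgen2
    simp only [Finset.sum_add_distrib, Finset.sum_sub_distrib] at h0
    exact h0
  linear_combination (norm := (push_cast; ring1)) (-zC) * hS - hAx - hBx - hRB + hRB' - hgensum2
    + (((m+1 : ℕ) : PP) - Qp 0 m 1) * zC_eq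

end HR

/-- For `1 ≤ i ≤ m+1`, `H_i = u·H_{i−1} + z·∇_m H_{i−1}`, stated in
the equivalent cleared form
`(u − 1)(H_i − u·H_{i−1}) = z·u·(H_{i−1} − u^{m+1}·H_{i−1}(1))` in `ℚ[z][u]`. -/
theorem Hpoly_recursion (m : ℕ) (hm : 1 ≤ m) (i : ℕ) (hi1 : 1 ≤ i) (hi2 : i ≤ m + 1) :
    (Polynomial.X - 1) * (Hpoly m i - Polynomial.X * Hpoly m (i - 1)) =
      zC * Polynomial.X *
        (Hpoly m (i - 1) -
          Polynomial.X ^ (m + 1) * Polynomial.C ((Hpoly m (i - 1)).eval 1)) := by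
  rcases Nat.lt_or_ge i (m + 1) with hlt | hge
  · obtain ⟨j, rfl⟩ : ∃ j, i = j + 1 := ⟨i - 1, by omega⟩
    obtain ⟨a, rfl⟩ : ∃ a, m = a + (j + 1) := ⟨m - (j + 1), by omega⟩
    simp only [Nat.add_sub_cancel]
    have hH1 := HR.Hpoly_eq a (j + 1)
    have hH2 := HR.Hpoly_eq (a + 1) j
    rw [show (a + 1) + j = a + (j + 1) by omega] at hH2
    have hE := HR.Heval (a + 1) j
    rw [show (a + 1) + j = a + (j + 1) by omega] at hE
    rw [hH1, hE, hH2]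
    linear_combination (Polynomial.X ^ (j + 1 + 1)) * HR.key1 a j
  · have hi : i = m + 1 := by omega
    subst hi
    simp only [Nat.add_sub_cancel]
    have hH1 := HR.Hpoly_top m
    have hH2 := HR.Hpoly_eq 0 m
    simp only [Nat.zero_add] at hH2
    have hE := HR.Heval 0 m
    simp only [Nat.zero_add] at hE
    rw [hH1, hE, hH2]
    linear_combination (Polynomial.X ^ (m + 2)) * HR.key2 m
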